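/- Let R be a commutative ring and M a reflexive R-module. Then the annihilator of the trace ideal τ(M) in R equals the annihilator of M in R. If moreover R is Noetherian and M is finitely generated and faithful, then τ(M) contains a nonzerodivisor of R. -/

import Mathlib

open TensorProduct

universe u v

/-- The trace ideal of a module: the ideal generated by all images of maps `M →ₗ[R] R`. -/
def traceIdeal (R : Type u) (M : Type*) [CommRing R] [AddCommGroup M] [Module R M] :
    Ideal R :=
  ⨆ f : M →ₗ[R] R, LinearMap.range f

section AuxAss

variable {R : Type*} [CommRing R]

/-- An associated prime of `M` is an associated prime of a submodule `N` or of `M ⧸ N`. -/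
lemma isAssociatedPrime_submodule_or_quotient [IsNoetherianRing R] {M : Type*} [AddCommGroup M] [Module R M]
    {p : Ideal R} (hp : IsAssociatedPrime p M) (N : Submodule R M) :
    IsAssociatedPrime p N ∨ IsAssociatedPrime p (M ⧸ N) := by
  obtain ⟨hprime, x, hx⟩ := (isAssociatedPrime_iff).mp hp
  by_cases h : ∀ r : R, r • x ∈ N → r • x = 0
  · right
    refine (isAssociatedPrime_iff).mpr ⟨hprime, N.mkQ x, ?_⟩
    ext s
    rw [Submodule.bot_colon'] at hx ⊢
    rw [hx, Submodule.mem_annihilator_span_singleton,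
      Submodule.mem_annihilator_span_singleton, ← map_smul, Submodule.mkQ_apply,
      Submodule.Quotient.mk_eq_zero]
    constructor
    · intro hs; rw [hs]; exact N.zero_mem
    · exact h s
  · left
    push_neg at h
    obtain ⟨r, hrN, hr0⟩ := h
    refine (isAssociatedPrime_iff).mpr ⟨hprime, ⟨r • x, hrN⟩, ?_⟩
    ext s
    rw [Submodule.bot_colon'] at hx ⊢
    rw [hx, Submodule.mem_annihilator_span_singleton,
      Submodule.mem_annihilator_span_singleton]
    have hsmul : (s • (⟨r • x, hrN⟩ : N) = 0) ↔ s • r • x = 0 := by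
      rw [Subtype.ext_iff]; rfl
    rw [hsmul]
    constructor
    · intro hs
      rw [smul_comm, hs, smul_zero]
    · intro hs
      rw [smul_smul] at hs
      have : s * r ∈ (Submodule.span R {x}).annihilator := by
        rw [Submodule.mem_annihilator_span_singleton]; exact hs
      rw [← hx] at this
      rcases hprime.mem_or_mem this with h1 | h1
      · rw [← Submodule.mem_annihilator_span_singleton, ← hx]; exact h1
      · exfalso; apply hr0
        rw [hx, Submodule.mem_annihilator_span_singleton] at h1
        exact h1

/-- Any associated prime of `R ⧸ p` (`p` prime) equals `p`. -/
lemma isAssociatedPrime_quotient_prime [IsNoetherianRing R] {p q : Ideal R} (hp : p.IsPrime)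
    (h : IsAssociatedPrime q (R ⧸ (p : Submodule R R))) : q = p := by
  obtain ⟨hq, x, hx⟩ := (isAssociatedPrime_iff).mp h
  obtain ⟨r, rfl⟩ := p.mkQ_surjective x
  have key : ∀ s : R, s ∈ q ↔ s * r ∈ p := by
    intro s
    rw [hx, Submodule.bot_colon', Submodule.mem_annihilator_span_singleton, ← map_smul, Submodule.mkQ_apply,
      Submodule.Quotient.mk_eq_zero, smul_eq_mul]
  by_cases hr : r ∈ p
  · exfalso
    exact hq.ne_top (Ideal.eq_top_iff_one _ |>.mpr ((key 1).mpr (by simpa using hr)))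
  · ext s
    rw [key s]
    exact ⟨fun hs => (hp.mem_or_mem hs).resolve_right hr, fun hs => p.mul_mem_right r hs⟩

/-- In a Noetherian ring, a finitely generated module has finitely many associated primes. -/
lemma associatedPrimes_finite (R : Type*) (M : Type*) [CommRing R] [IsNoetherianRing R]
    [AddCommGroup M] [Module R M] [Module.Finite R M] :
    (associatedPrimes R M).Finite := by
  have hN : IsNoetherian R M := isNoetherian_of_isNoetherianRing_of_finite R M
  obtain ⟨N, hNmem, hNmax⟩ := set_has_maximal_iff_noetherian.mpr hN
      {N : Submodule R M | (associatedPrimes R N).Finite}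
      ⟨⊥, by
        simp only [Set.mem_setOf_eq]
        rw [associatedPrimes.eq_empty_of_subsingleton]
        exact Set.finite_empty⟩
  -- It suffices to show `N = ⊤`.
  have hNtop : N = ⊤ := by
    by_contra hne
    have hlt : N < ⊤ := lt_top_iff_ne_top.mpr hne
    have : Nontrivial (M ⧸ N) := (Submodule.Quotient.nontrivial_iff).mpr hne
    obtain ⟨p, hpass⟩ := associatedPrimes.nonempty R (M ⧸ N)
    obtain ⟨hpprime, y, hy⟩ := (isAssociatedPrime_iff).mp hpass
    obtain ⟨x, rfl⟩ := N.mkQ_surjective y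
    have hxmem : x ∈ N ⊔ Submodule.span R {x} :=
      Submodule.mem_sup_right (Submodule.mem_span_singleton_self x)
    set N' : Submodule R M := N ⊔ Submodule.span R {x} with hN'
    have hNN' : N ≤ N' := le_sup_left
    have hltN' : N < N' := by
      refine lt_of_le_of_ne hNN' ?_
      intro hEq
      have hxN : x ∈ N := hEq ▸ hxmem
      have : N.mkQ x = 0 := (Submodule.Quotient.mk_eq_zero N).mpr hxN
      rw [this, Submodule.bot_colon', Submodule.span_singleton_eq_bot.mpr rfl, Submodule.annihilator_bot] at hy
      exact hpprime.ne_top hy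
    -- the submodule `N` viewed inside `N'`
    set N₀ : Submodule R N' := Submodule.comap N'.subtype N with hN₀
    -- the map `R → N' ⧸ N₀`
    let φ : R →ₗ[R] (N' ⧸ N₀) := N₀.mkQ ∘ₗ
      ((LinearMap.toSpanSingleton R N' ⟨x, hxmem⟩))
    have hφsurj : Function.Surjective φ := by
      intro z
      obtain ⟨⟨w, hw⟩, rfl⟩ := N₀.mkQ_surjective z
      obtain ⟨n, hn, sx, hsx, hws⟩ := Submodule.mem_sup.mp (hN' ▸ hw)
      obtain ⟨r, rfl⟩ := Submodule.mem_span_singleton.mp hsx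
      refine ⟨r, ?_⟩
      show N₀.mkQ (r • ⟨x, hxmem⟩) = N₀.mkQ ⟨w, hw⟩
      rw [← sub_eq_zero, ← map_sub, Submodule.mkQ_apply, Submodule.Quotient.mk_eq_zero,
        hN₀, Submodule.mem_comap]
      show r • x - w ∈ N
      rw [← hws]
      simpa using (neg_mem hn)
    have hker : LinearMap.ker φ = p := by
      ext s
      rw [LinearMap.mem_ker]
      show N₀.mkQ (s • ⟨x, hxmem⟩) = 0 ↔ s ∈ p
      rw [Submodule.mkQ_apply, Submodule.Quotient.mk_eq_zero, hN₀, Submodule.mem_comap]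
      show s • x ∈ N ↔ s ∈ p
      rw [hy, Submodule.bot_colon', Submodule.mem_annihilator_span_singleton, ← map_smul, Submodule.mkQ_apply,
        Submodule.Quotient.mk_eq_zero]
    -- hence `N' ⧸ N₀ ≃ₗ R ⧸ p`
    let e : (R ⧸ (p : Submodule R R)) ≃ₗ[R] (N' ⧸ N₀) :=
      (Submodule.quotEquivOfEq _ _ hker.symm).trans (φ.quotKerEquivOfSurjective hφsurj)
    -- associated primes of `N'` are finite
    have hN'fin : (associatedPrimes R N').Finite := by
      have hsub : associatedPrimes R N' ⊆ insert p (associatedPrimes R N) := by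
        intro q hq
        rcases isAssociatedPrime_submodule_or_quotient hq N₀ with h1 | h1
        · right
          exact (LinearEquiv.AssociatedPrimes.eq
            (Submodule.comapSubtypeEquivOfLe hNN')) ▸ h1
        · left
          exact isAssociatedPrime_quotient_prime hpprime
            ((e.isAssociatedPrime_iff).mpr h1)
      exact Set.Finite.subset (Set.Finite.insert p hNmem) hsub
    exact hNmax N' hN'fin hltN'
  subst hNtop
  have := LinearEquiv.AssociatedPrimes.eq (Submodule.topEquiv (R := R) (M := M))
  rw [← this]
  exact hNmem

end AuxAss

/-- Let `R` be a commutative ring and `M` a reflexive `R`-module.  Then the annihilator of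
the trace ideal `τ(M)` equals the annihilator of `M`.  If moreover `R` is Noetherian and
`M` is finitely generated and faithful, then `τ(M)` contains a nonzerodivisor of `R`. -/
theorem annihilator_traceIdeal (R : Type u) (M : Type v) [CommRing R] [AddCommGroup M]
    [Module R M] [Module.IsReflexive R M] :
    (traceIdeal R M).annihilator = Module.annihilator R M ∧
    (∀ (_ : IsNoetherianRing R) (_ : Module.Finite R M),
      Module.annihilator R M = ⊥ →
        ∃ r ∈ traceIdeal R M, r ∈ nonZeroDivisors R) := by
  have part1 : (traceIdeal R M).annihilator = Module.annihilator R M := by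
    apply le_antisymm
    · intro r hr
      rw [Submodule.mem_annihilator] at hr
      rw [Module.mem_annihilator]
      intro m
      apply (Module.bijective_dual_eval R M).injective
      rw [map_zero]
      ext f
      have hfm : f m ∈ traceIdeal R M :=
        (le_iSup (fun f : M →ₗ[R] R => LinearMap.range f) f) ⟨m, rfl⟩
      have h0 := hr (f m) hfm
      change f (r • m) = 0
      rw [map_smul]
      exact h0
    · intro r hr
      rw [Module.mem_annihilator] at hr
      rw [Submodule.mem_annihilator]
      intro a ha
      refine Submodule.iSup_induction (fun f : M →ₗ[R] R => LinearMap.range f)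
        (motive := fun a => r • a = 0) ha ?_ ?_ ?_
      · rintro f _ ⟨m, rfl⟩
        rw [← map_smul, hr m, map_zero]
      · exact smul_zero r
      · intro x y hx hy
        rw [smul_add, hx, hy, add_zero]
  refine ⟨part1, ?_⟩
  intro hNoeth hFin hann
  by_contra hcon
  push_neg at hcon
  -- every element of the trace ideal is a zero divisor
  have hZD : (traceIdeal R M : Set R) ⊆ ⋃ p ∈ associatedPrimes R R, (p : Set R) := by
    intro a ha
    rw [biUnion_associatedPrimes_eq_zero_divisors]
    have := hcon a ha
    rw [mem_nonZeroDivisors_iff_right] at this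
    push_neg at this
    obtain ⟨x, hx1, hx2⟩ := this
    exact ⟨x, hx2, by rw [smul_eq_mul, mul_comm]; exact hx1⟩
  -- associated primes of `R` form a finite set
  have hfin : (associatedPrimes R R).Finite := associatedPrimes_finite R R
  -- prime avoidance
  have havoid : ∃ p ∈ hfin.toFinset, traceIdeal R M ≤ p := by
    rw [← Ideal.subset_union_prime (⊥ : Ideal R) (⊥ : Ideal R)
      (f := fun p : Ideal R => p) (fun i hi _ _ => by
        rw [Set.Finite.mem_toFinset] at hi
        exact hi.isPrime)]
    intro a ha
    have := hZD ha
    simp only [Set.mem_iUnion, SetLike.mem_coe, exists_prop] at this ⊢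
    obtain ⟨p, hp1, hp2⟩ := this
    exact ⟨p, (Set.Finite.mem_toFinset hfin).mpr hp1, hp2⟩
  obtain ⟨p, hpmem, hple⟩ := havoid
  rw [Set.Finite.mem_toFinset] at hpmem
  obtain ⟨hpprime, x, hx⟩ := (isAssociatedPrime_iff).mp hpmem
  have hx0 : x ≠ 0 := by
    rintro rfl
    rw [Submodule.bot_colon', Submodule.span_singleton_eq_bot.mpr rfl, Submodule.annihilator_bot] at hx
    exact hpprime.ne_top hx
  apply hx0
  have : x ∈ (traceIdeal R M).annihilator := by
    rw [Submodule.mem_annihilator]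
    intro a ha
    have hap : a ∈ p := hple ha
    rw [hx, Submodule.bot_colon', Submodule.mem_annihilator_span_singleton] at hap
    rw [smul_eq_mul, mul_comm, ← smul_eq_mul]
    exact hap
  rw [part1, hann] at this
  exact this
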